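/- Let q ∈ [1,∞), let a : (0,∞) → ℂ be measurable with ‖a‖_{V^q} < ∞, and let w : (0,1) → [0,∞) be integrable. Then for every t > 0 the integral b(t) := ∫_0^1 w(r) a(r t) dr is well defined (a is bounded by ‖a‖_{V^q}), and ‖b‖_{V^q} ≤ ( ∫_0^1 w(r) dr ) · ‖a‖_{V^q}. -/

import Mathlib

open MeasureTheory Filter Set
open scoped ENNReal NNReal FourierTransform

noncomputable section

/-- The `q`-variation (extended) norm of a path `a` on `(0, ∞)`:
the supremum over all increasing sequences `0 < t 0 < t 1 < ⋯` of
`(‖a (t 0)‖^q + ∑_k ‖a (t (k+1)) - a (t k)‖^q)^(1/q)`. -/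
def eVarNorm (q : ℝ) (a : ℝ → ℂ) : ℝ≥0∞ :=
  ⨆ (t : ℕ → ℝ) (_ : StrictMono t) (_ : 0 < t 0),
    (ENNReal.ofReal (‖a (t 0)‖ ^ q)
      + ∑' k : ℕ, ENNReal.ofReal (‖a (t (k + 1)) - a (t k)‖ ^ q)) ^ (1 / q)

/-- pointwise bound by the variation norm -/
lemma eVarNorm_norm_le (q : ℝ) (hq : 1 ≤ q) (a : ℝ → ℂ) {s : ℝ} (hs : 0 < s) :
    ENNReal.ofReal ‖a s‖ ≤ eVarNorm q a := by
  have hq0 : 0 < q := lt_of_lt_of_le one_pos hq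
  have hmono : StrictMono (fun k : ℕ => s + (k : ℝ)) := fun i j hij => by
    dsimp only
    exact add_lt_add_right (Nat.cast_lt.mpr hij) s
  have h0 : 0 < (fun k : ℕ => s + (k : ℝ)) 0 := by simpa using hs
  refine le_trans ?_ (le_iSup_of_le (fun k : ℕ => s + (k : ℝ))
    (le_iSup_of_le hmono (le_iSup_of_le h0 le_rfl)))
  have h1 : ENNReal.ofReal ‖a s‖
      = (ENNReal.ofReal (‖a ((fun k : ℕ => s + (k : ℝ)) 0)‖ ^ q)) ^ (1 / q) := by
    simp only [Nat.cast_zero, add_zero]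
    rw [← ENNReal.ofReal_rpow_of_nonneg (norm_nonneg _) hq0.le, ← ENNReal.rpow_mul,
      mul_one_div, div_self hq0.ne', ENNReal.rpow_one]
  rw [h1]
  exact ENNReal.rpow_le_rpow (self_le_add_right _ _) (by positivity)

/-- partial sums of the variation are bounded by `M ^ q` -/
lemma eVarNorm_partial_le (q : ℝ) (hq : 1 ≤ q) (a : ℝ → ℂ) (hVq : eVarNorm q a ≠ ⊤)
    (t : ℕ → ℝ) (ht : StrictMono t) (ht0 : 0 < t 0) (n : ℕ) :
    ‖a (t 0)‖ ^ q + ∑ k ∈ Finset.range n, ‖a (t (k + 1)) - a (t k)‖ ^ q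
      ≤ (eVarNorm q a).toReal ^ q := by
  have hq0 : 0 < q := lt_of_lt_of_le one_pos hq
  set M := (eVarNorm q a).toReal with hM
  have hVM : eVarNorm q a = ENNReal.ofReal M := (ENNReal.ofReal_toReal hVq).symm
  have h1 : (ENNReal.ofReal (‖a (t 0)‖ ^ q)
      + ∑' k : ℕ, ENNReal.ofReal (‖a (t (k + 1)) - a (t k)‖ ^ q)) ^ (1 / q)
      ≤ eVarNorm q a :=
    le_iSup_of_le t (le_iSup_of_le ht (le_iSup_of_le ht0 le_rfl))
  have h2 : ENNReal.ofReal (‖a (t 0)‖ ^ q)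
      + ∑' k : ℕ, ENNReal.ofReal (‖a (t (k + 1)) - a (t k)‖ ^ q)
      ≤ (eVarNorm q a) ^ q := by
    have h3 := ENNReal.rpow_le_rpow h1 hq0.le
    rwa [← ENNReal.rpow_mul, one_div_mul_cancel hq0.ne', ENNReal.rpow_one] at h3
  have h4 : ENNReal.ofReal (‖a (t 0)‖ ^ q)
      + ∑ k ∈ Finset.range n, ENNReal.ofReal (‖a (t (k + 1)) - a (t k)‖ ^ q)
      ≤ ENNReal.ofReal (M ^ q) := by
    refine le_trans (add_le_add_right (ENNReal.sum_le_tsum _) _) (h2.trans ?_)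
    rw [hVM, ← ENNReal.ofReal_rpow_of_nonneg ENNReal.toReal_nonneg hq0.le]
  rw [← ENNReal.ofReal_sum_of_nonneg (fun i _ => by positivity),
    ← ENNReal.ofReal_add (by positivity) (by positivity)] at h4
  exact (ENNReal.ofReal_le_ofReal_iff (by positivity)).mp h4

/-- Finite Minkowski inequality via a `PiLp` Bochner integral. -/
lemma key_minkowski {n : ℕ} (q : ℝ) (hq : 1 ≤ q) (w : ℝ → ℝ)
    (hw0 : ∀ r ∈ Set.Ioo (0 : ℝ) 1, 0 ≤ w r)
    (hwInt : IntegrableOn w (Set.Ioo (0 : ℝ) 1))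
    (u : Fin n → ℝ → ℝ) (hu0 : ∀ i r, 0 ≤ u i r)
    (huint : ∀ i, IntegrableOn (fun r => w r * u i r) (Set.Ioo (0 : ℝ) 1))
    (M : ℝ) (hM : 0 ≤ M)
    (huM : ∀ r ∈ Set.Ioo (0 : ℝ) 1, (∑ i, u i r ^ q) ≤ M ^ q) :
    ∑ i, (∫ r in Set.Ioo (0 : ℝ) 1, w r * u i r) ^ q
      ≤ ((∫ r in Set.Ioo (0 : ℝ) 1, w r) * M) ^ q := by
  have hq0 : 0 < q := lt_of_lt_of_le one_pos hq
  haveI : Fact (1 ≤ ENNReal.ofReal q) := ⟨ENNReal.one_le_ofReal.mpr hq⟩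
  set p : ℝ≥0∞ := ENNReal.ofReal q with hp
  have hpt : p.toReal = q := ENNReal.toReal_ofReal hq0.le
  let E := PiLp p (fun _ : Fin n => ℝ)
  let e : Fin n → E := fun i => (WithLp.equiv p (Fin n → ℝ)).symm (Pi.single i 1)
  let G : ℝ → E := fun r => ∑ i, (w r * u i r) • e i
  set v : Fin n → ℝ := fun i => ∫ r in Set.Ioo (0 : ℝ) 1, w r * u i r with hv
  have coord : ∀ (c : Fin n → ℝ) (j : Fin n), (∑ i, c i • e i : E) j = c j := by
    intro c j
    rw [WithLp.ofLp_sum]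
    show (∑ i, c i • (Pi.single i 1 : Fin n → ℝ)) j = c j
    have h1 : ∀ i : Fin n, c i • (Pi.single i (1 : ℝ) : Fin n → ℝ) = Pi.single i (c i) := by
      intro i; ext k; simp [Pi.single_apply, mul_comm]
    simp_rw [h1]
    rw [Finset.univ_sum_single]
  have hGint : IntegrableOn G (Set.Ioo (0 : ℝ) 1) :=
    integrable_finset_sum _ (fun i _ => (huint i).smul_const (e i))
  have hGeq : (∫ r in Set.Ioo (0 : ℝ) 1, G r) = ∑ i, v i • e i := by
    rw [integral_finset_sum _ (fun i _ => (huint i).smul_const (e i))]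
    simp only [integral_smul_const]
    rfl
  have hv0 : ∀ i, 0 ≤ v i := fun i =>
    setIntegral_nonneg measurableSet_Ioo (fun r hr => mul_nonneg (hw0 r hr) (hu0 i r))
  have hpt' : 0 < p.toReal := by rw [hpt]; exact hq0
  have h1 : ∑ i, v i ^ q = ‖∫ r in Set.Ioo (0 : ℝ) 1, G r‖ ^ q := by
    rw [hGeq, PiLp.norm_eq_sum hpt', hpt]
    have h2 : ∀ i : Fin n, ‖(∑ k, v k • e k : E) i‖ ^ q = v i ^ q := by
      intro i
      rw [coord v i, Real.norm_eq_abs, abs_of_nonneg (hv0 i)]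
    rw [Finset.sum_congr rfl (fun i _ => h2 i),
      ← Real.rpow_mul (Finset.sum_nonneg (fun i _ => Real.rpow_nonneg (hv0 i) q)),
      one_div_mul_cancel hq0.ne', Real.rpow_one]
  have h2 : ‖∫ r in Set.Ioo (0 : ℝ) 1, G r‖ ≤ (∫ r in Set.Ioo (0 : ℝ) 1, w r) * M := by
    refine (norm_integral_le_integral_norm _).trans ?_
    rw [← integral_mul_const]
    refine setIntegral_mono_on hGint.norm (hwInt.mul_const M) measurableSet_Ioo ?_
    intro r hr
    have hcr : ∀ j : Fin n, (G r : E) j = w r * u j r := coord (fun i => w r * u i r)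
    rw [PiLp.norm_eq_sum hpt', hpt]
    have h3 : ∀ i : Fin n, ‖(G r : E) i‖ ^ q = w r ^ q * u i r ^ q := by
      intro i
      rw [hcr i, Real.norm_eq_abs, abs_of_nonneg (mul_nonneg (hw0 r hr) (hu0 i r)),
        Real.mul_rpow (hw0 r hr) (hu0 i r)]
    rw [Finset.sum_congr rfl (fun i _ => h3 i), ← Finset.mul_sum,
      Real.mul_rpow (Real.rpow_nonneg (hw0 r hr) q)
        (Finset.sum_nonneg (fun i _ => Real.rpow_nonneg (hu0 i r) q)),
      ← Real.rpow_mul (hw0 r hr), mul_one_div, div_self hq0.ne', Real.rpow_one]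
    refine mul_le_mul_of_nonneg_left ?_ (hw0 r hr)
    calc (∑ i, u i r ^ q) ^ (1 / q) ≤ (M ^ q) ^ (1 / q) :=
          Real.rpow_le_rpow (Finset.sum_nonneg (fun i _ => Real.rpow_nonneg (hu0 i r) q))
            (huM r hr) (by positivity)
      _ = M := by
          rw [← Real.rpow_mul hM, mul_one_div, div_self hq0.ne', Real.rpow_one]
  calc ∑ i, v i ^ q = ‖∫ r in Set.Ioo (0 : ℝ) 1, G r‖ ^ q := h1
    _ ≤ ((∫ r in Set.Ioo (0 : ℝ) 1, w r) * M) ^ q :=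
        Real.rpow_le_rpow (norm_nonneg _) h2 hq0.le

/-- Minkowski-type inequality for `V^q`: if `a : (0,∞) → ℂ` is measurable
with finite `q`-variation and `w : (0,1) → [0,∞)` is integrable, then for every `t > 0` the
integral `b(t) = ∫_0^1 w(r) a(r t) dr` is well defined, and
`‖b‖_{V^q} ≤ (∫_0^1 w) · ‖a‖_{V^q}`. -/
theorem eVarNorm_average_le (q : ℝ) (hq : 1 ≤ q) (a : ℝ → ℂ) (ha : Measurable a)
    (hVq : eVarNorm q a ≠ ⊤) (w : ℝ → ℝ) (hw0 : ∀ r ∈ Set.Ioo (0 : ℝ) 1, 0 ≤ w r)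
    (hwInt : IntegrableOn w (Set.Ioo (0 : ℝ) 1)) :
    (∀ t : ℝ, 0 < t → IntegrableOn (fun r => (w r : ℂ) * a (r * t)) (Set.Ioo (0 : ℝ) 1)) ∧
    eVarNorm q (fun t => ∫ r in Set.Ioo (0 : ℝ) 1, (w r : ℂ) * a (r * t)) ≤
      ENNReal.ofReal (∫ r in Set.Ioo (0 : ℝ) 1, w r) * eVarNorm q a := by
  have hq0 : 0 < q := lt_of_lt_of_le one_pos hq
  set M := (eVarNorm q a).toReal with hMdef
  have hM0 : 0 ≤ M := ENNReal.toReal_nonneg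
  have hVM : eVarNorm q a = ENNReal.ofReal M := (ENNReal.ofReal_toReal hVq).symm
  have hbound : ∀ s : ℝ, 0 < s → ‖a s‖ ≤ M := by
    intro s hs
    have h := eVarNorm_norm_le q hq a hs
    rw [hVM] at h
    exact (ENNReal.ofReal_le_ofReal_iff hM0).mp h
  -- Part 1 : integrability
  have hint : ∀ t : ℝ, 0 < t →
      IntegrableOn (fun r => (w r : ℂ) * a (r * t)) (Set.Ioo (0 : ℝ) 1) := by
    intro t ht
    have hm : AEStronglyMeasurable (fun r => (w r : ℂ) * a (r * t))
        (volume.restrict (Set.Ioo (0 : ℝ) 1)) :=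
      (Complex.continuous_ofReal.comp_aestronglyMeasurable hwInt.aestronglyMeasurable).mul
        ((ha.comp (measurable_id.mul_const t)).aestronglyMeasurable)
    refine Integrable.mono' (hwInt.norm.mul_const M) hm ?_
    filter_upwards [ae_restrict_mem measurableSet_Ioo] with r hr
    have hrt : 0 < r * t := mul_pos hr.1 ht
    calc ‖(w r : ℂ) * a (r * t)‖ = ‖w r‖ * ‖a (r * t)‖ := by
          rw [norm_mul, Complex.norm_real]
      _ ≤ ‖w r‖ * M := mul_le_mul_of_nonneg_left (hbound _ hrt) (norm_nonneg _)
  refine ⟨hint, ?_⟩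
  -- integrability of weighted norms and norm differences
  have hint0 : ∀ t : ℝ, 0 < t →
      IntegrableOn (fun r => w r * ‖a (r * t)‖) (Set.Ioo (0 : ℝ) 1) := by
    intro t ht
    have hm : AEStronglyMeasurable (fun r => w r * ‖a (r * t)‖)
        (volume.restrict (Set.Ioo (0 : ℝ) 1)) :=
      hwInt.aestronglyMeasurable.mul
        ((ha.comp (measurable_id.mul_const t)).norm.aestronglyMeasurable)
    refine Integrable.mono' (hwInt.norm.mul_const M) hm ?_
    filter_upwards [ae_restrict_mem measurableSet_Ioo] with r hr
    have hrt : 0 < r * t := mul_pos hr.1 ht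
    calc ‖w r * ‖a (r * t)‖‖ = ‖w r‖ * ‖a (r * t)‖ := by
          rw [norm_mul, norm_norm]
      _ ≤ ‖w r‖ * M := mul_le_mul_of_nonneg_left (hbound _ hrt) (norm_nonneg _)
  have hint1 : ∀ t1 t2 : ℝ, 0 < t1 → 0 < t2 →
      IntegrableOn (fun r => w r * ‖a (r * t2) - a (r * t1)‖) (Set.Ioo (0 : ℝ) 1) := by
    intro t1 t2 ht1 ht2
    have hm : AEStronglyMeasurable (fun r => w r * ‖a (r * t2) - a (r * t1)‖)
        (volume.restrict (Set.Ioo (0 : ℝ) 1)) :=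
      hwInt.aestronglyMeasurable.mul
        (((ha.comp (measurable_id.mul_const t2)).sub
          (ha.comp (measurable_id.mul_const t1))).norm.aestronglyMeasurable)
    refine Integrable.mono' (hwInt.norm.mul_const (M + M)) hm ?_
    filter_upwards [ae_restrict_mem measurableSet_Ioo] with r hr
    have h1 : 0 < r * t1 := mul_pos hr.1 ht1
    have h2 : 0 < r * t2 := mul_pos hr.1 ht2
    calc ‖w r * ‖a (r * t2) - a (r * t1)‖‖ = ‖w r‖ * ‖a (r * t2) - a (r * t1)‖ := by
          rw [norm_mul, norm_norm]
      _ ≤ ‖w r‖ * (M + M) := by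
          refine mul_le_mul_of_nonneg_left ?_ (norm_nonneg _)
          exact (norm_sub_le _ _).trans (add_le_add (hbound _ h2) (hbound _ h1))
  set W : ℝ := ∫ r in Set.Ioo (0 : ℝ) 1, w r with hWdef
  have hW0 : 0 ≤ W := setIntegral_nonneg measurableSet_Ioo hw0
  set b : ℝ → ℂ := fun t => ∫ r in Set.Ioo (0 : ℝ) 1, (w r : ℂ) * a (r * t) with hbdef
  rw [eVarNorm]
  refine iSup_le fun t => iSup_le fun ht => iSup_le fun ht0 => ?_
  have htk : ∀ k : ℕ, 0 < t k := fun k => lt_of_lt_of_le ht0 (ht.monotone (Nat.zero_le k))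
  -- bounds on b differences
  have hb0 : ‖b (t 0)‖ ≤ ∫ r in Set.Ioo (0 : ℝ) 1, w r * ‖a (r * t 0)‖ := by
    refine (norm_integral_le_integral_norm _).trans (le_of_eq ?_)
    refine setIntegral_congr_fun measurableSet_Ioo (fun r hr => ?_)
    rw [norm_mul, Complex.norm_real, Real.norm_eq_abs, abs_of_nonneg (hw0 r hr)]
  have hbk : ∀ k : ℕ, ‖b (t (k + 1)) - b (t k)‖
      ≤ ∫ r in Set.Ioo (0 : ℝ) 1, w r * ‖a (r * t (k + 1)) - a (r * t k)‖ := by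
    intro k
    have hsub : b (t (k + 1)) - b (t k)
        = ∫ r in Set.Ioo (0 : ℝ) 1, (w r : ℂ) * (a (r * t (k + 1)) - a (r * t k)) := by
      rw [hbdef]
      dsimp only
      rw [← integral_sub (hint _ (htk (k + 1))) (hint _ (htk k))]
      exact integral_congr_ae (Filter.Eventually.of_forall fun r => (mul_sub _ _ _).symm)
    rw [hsub]
    refine (norm_integral_le_integral_norm _).trans (le_of_eq ?_)
    refine setIntegral_congr_fun measurableSet_Ioo (fun r hr => ?_)
    rw [norm_mul, Complex.norm_real, Real.norm_eq_abs, abs_of_nonneg (hw0 r hr)]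
  -- key real inequality
  have key : ∀ n : ℕ, ‖b (t 0)‖ ^ q + ∑ k ∈ Finset.range n, ‖b (t (k + 1)) - b (t k)‖ ^ q
      ≤ (W * M) ^ q := by
    intro n
    set u : Fin (n + 1) → ℝ → ℝ := fun i =>
      Fin.cases (fun r => ‖a (r * t 0)‖) (fun k r => ‖a (r * t (k + 1)) - a (r * t k)‖) i
      with hu
    have hu0 : ∀ i r, 0 ≤ u i r := by
      intro i r
      induction i using Fin.cases with
      | zero => simp [hu]
      | succ k => simp [hu]
    have huint : ∀ i, IntegrableOn (fun r => w r * u i r) (Set.Ioo (0 : ℝ) 1) := by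
      intro i
      induction i using Fin.cases with
      | zero => simpa [hu] using hint0 (t 0) (htk 0)
      | succ k => simpa [hu] using hint1 (t k) (t (k + 1)) (htk k) (htk (k + 1))
    have huM : ∀ r ∈ Set.Ioo (0 : ℝ) 1, (∑ i, u i r ^ q) ≤ M ^ q := by
      intro r hr
      have hmono : StrictMono (fun k : ℕ => r * t k) := fun i j hij =>
        mul_lt_mul_of_pos_left (ht hij) hr.1
      have h0 : 0 < (fun k : ℕ => r * t k) 0 := mul_pos hr.1 ht0
      have h := eVarNorm_partial_le q hq a hVq _ hmono h0 n
      rw [Fin.sum_univ_succ]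
      simp only [hu, Fin.cases_zero, Fin.cases_succ]
      rw [Fin.sum_univ_eq_sum_range (fun k => ‖a (r * t (k + 1)) - a (r * t k)‖ ^ q) n]
      exact h
    have hkm := key_minkowski q hq w hw0 hwInt u hu0 huint M hM0 huM
    refine le_trans ?_ hkm
    rw [Fin.sum_univ_succ,
      ← Fin.sum_univ_eq_sum_range (fun k => ‖b (t (k + 1)) - b (t k)‖ ^ q) n]
    refine add_le_add ?_ (Finset.sum_le_sum fun i _ => ?_)
    · simp only [hu, Fin.cases_zero]
      exact Real.rpow_le_rpow (norm_nonneg _) hb0 hq0.le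
    · simp only [hu, Fin.cases_succ]
      exact Real.rpow_le_rpow (norm_nonneg _) (hbk i) hq0.le
  -- assemble in ℝ≥0∞
  have hsum : ENNReal.ofReal (‖b (t 0)‖ ^ q)
      + ∑' k : ℕ, ENNReal.ofReal (‖b (t (k + 1)) - b (t k)‖ ^ q)
      ≤ ENNReal.ofReal ((W * M) ^ q) := by
    rw [ENNReal.tsum_eq_iSup_sum' Finset.range Finset.exists_nat_subset_range,
      ENNReal.add_iSup]
    refine iSup_le fun n => ?_
    rw [← ENNReal.ofReal_sum_of_nonneg (fun i _ => by positivity),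
      ← ENNReal.ofReal_add (by positivity) (by positivity)]
    exact ENNReal.ofReal_le_ofReal (key n)
  calc (ENNReal.ofReal (‖b (t 0)‖ ^ q)
      + ∑' k : ℕ, ENNReal.ofReal (‖b (t (k + 1)) - b (t k)‖ ^ q)) ^ (1 / q)
      ≤ (ENNReal.ofReal ((W * M) ^ q)) ^ (1 / q) :=
        ENNReal.rpow_le_rpow hsum (by positivity)
    _ = ENNReal.ofReal (W * M) := by
        rw [← ENNReal.ofReal_rpow_of_nonneg (by positivity) hq0.le, ← ENNReal.rpow_mul,
          mul_one_div, div_self hq0.ne', ENNReal.rpow_one]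
    _ = ENNReal.ofReal W * eVarNorm q a := by
        rw [ENNReal.ofReal_mul hW0, hVM]

end
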